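/- Let Ω ∈ ℝ^{n×ℓ} be a random matrix whose columns are independent isotropic random vectors, and set Z = Σ⊥ Ω̂₂ where Ω̂₂ = V⊥ᵀΩ. Then E[ ‖ (1/ℓ) Z Zᵀ − Σ⊥Σ⊥ᵀ ‖₂ ] ≤ 2√2 · ‖Σ⊥‖_F². -/

import Mathlib

open MeasureTheory Matrix ProbabilityTheory

noncomputable section

/-- Spectral norm (largest singular value) of a real matrix. -/
def spec {m n : ℕ} (A : Matrix (Fin m) (Fin n) ℝ) : ℝ :=
  ‖LinearMap.toContinuousLinearMap (Matrix.toEuclideanLin A)‖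

/-- Frobenius norm of a real matrix. -/
def frob {m n : ℕ} (A : Matrix (Fin m) (Fin n) ℝ) : ℝ :=
  Real.sqrt (∑ i, ∑ j, (A i j) ^ 2)

/-- Stable rank `sr(A) = ‖A‖_F² / ‖A‖₂²`. -/
def srank {m n : ℕ} (A : Matrix (Fin m) (Fin n) ℝ) : ℝ :=
  frob A ^ 2 / spec A ^ 2

/-- Euclidean norm of a vector. -/
def vnorm {d : ℕ} (v : Fin d → ℝ) : ℝ := Real.sqrt (∑ i, v i ^ 2)

/- Moore–Penrose pseudoinverse, via the four Penrose conditions. -/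
open scoped Classical in
def pinv {m n : ℕ} (A : Matrix (Fin m) (Fin n) ℝ) : Matrix (Fin n) (Fin m) ℝ :=
  if h : ∃ B : Matrix (Fin n) (Fin m) ℝ,
      A * B * A = A ∧ B * A * B = B ∧ (A * B)ᵀ = A * B ∧ (B * A)ᵀ = B * A
  then h.choose else 0

/-- The sub-Gaussian norm of `X` is at most `K`:
`‖X‖_{ψ₂} = inf {t > 0 | E exp(X²/t²) ≤ 2} ≤ K`. -/
def SubGaussNormLE {Ω : Type} [MeasurableSpace Ω] (μ : Measure Ω) (X : Ω → ℝ) (K : ℝ) : Prop :=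
  ∀ t : ℝ, K < t → ∫ ω, Real.exp ((X ω) ^ 2 / t ^ 2) ∂μ ≤ 2

/-- The sub-Gaussian norm of the random vector `x` is at most `K`:
`sup_{‖z‖=1} ‖⟨x,z⟩‖_{ψ₂} ≤ K`. -/
def VecSubGaussNormLE {Ω : Type} [MeasurableSpace Ω] (μ : Measure Ω) {d : ℕ}
    (x : Ω → Fin d → ℝ) (K : ℝ) : Prop :=
  ∀ z : Fin d → ℝ, (∑ i, z i ^ 2) = 1 → SubGaussNormLE μ (fun ω => ∑ i, x ω i * z i) K

/-- A random vector is isotropic: `E[x] = 0` and `E[x xᵀ] = I`. -/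
def Isotropic {Ω : Type} [MeasurableSpace Ω] (μ : Measure Ω) {d : ℕ}
    (x : Ω → Fin d → ℝ) : Prop :=
  (∀ i, ∫ ω, x ω i ∂μ = 0) ∧
  (∀ i j, ∫ ω, x ω i * x ω j ∂μ = if i = j then 1 else 0)

/-- The first `k` columns of an `n×n` matrix. -/
def colsLeft {n : ℕ} (k : ℕ) (h : k ≤ n) (V : Matrix (Fin n) (Fin n) ℝ) :
    Matrix (Fin n) (Fin k) ℝ :=
  Matrix.of fun i j => V i (Fin.castLE h j)

/-- The last `n - k` columns of an `n×n` matrix. -/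
def colsRight {n : ℕ} (k : ℕ) (V : Matrix (Fin n) (Fin n) ℝ) :
    Matrix (Fin n) (Fin (n - k)) ℝ :=
  Matrix.of fun i j => V i ⟨k + j.1, by have := j.isLt; omega⟩

/-- The trailing diagonal block `Σ⊥ = diag(σ_{k+1},…,σ_n)`. -/
def tailDiag {n : ℕ} (k : ℕ) (σ : Fin n → ℝ) :
    Matrix (Fin (n - k)) (Fin (n - k)) ℝ :=
  Matrix.diagonal fun j => σ ⟨k + j.1, by have := j.isLt; omega⟩


attribute [local instance] Matrix.frobeniusSeminormedAddCommGroup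

lemma frob_eq_norm {m n : ℕ} (A : Matrix (Fin m) (Fin n) ℝ) : frob A = ‖A‖ := by
  rw [frob, Matrix.frobenius_norm_def, Real.sqrt_eq_rpow]
  congr 1
  refine Finset.sum_congr rfl fun i _ => Finset.sum_congr rfl fun j _ => ?_
  rw [Real.norm_eq_abs, Real.rpow_two, sq_abs]

lemma frob_nonneg {m n : ℕ} (A : Matrix (Fin m) (Fin n) ℝ) : 0 ≤ frob A :=
  Real.sqrt_nonneg _

lemma frob_sq {m n : ℕ} (A : Matrix (Fin m) (Fin n) ℝ) :
    frob A ^ 2 = ∑ i, ∑ j, (A i j) ^ 2 :=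
  Real.sq_sqrt (Finset.sum_nonneg fun _ _ => Finset.sum_nonneg fun _ _ => sq_nonneg _)

lemma frob_transpose {m n : ℕ} (A : Matrix (Fin m) (Fin n) ℝ) : frob Aᵀ = frob A := by
  rw [frob, frob, Finset.sum_comm]; rfl

lemma frob_sub_le {m n : ℕ} (A B : Matrix (Fin m) (Fin n) ℝ) :
    frob (A - B) ≤ frob A + frob B := by
  simp only [frob_eq_norm]; exact norm_sub_le A B

lemma frob_mul_le {m n p : ℕ} (A : Matrix (Fin m) (Fin n) ℝ) (B : Matrix (Fin n) (Fin p) ℝ) :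
    frob (A * B) ≤ frob A * frob B := by
  simp only [frob_eq_norm]; exact Matrix.frobenius_norm_mul A B

lemma frob_smul {m n : ℕ} (c : ℝ) (hc : 0 ≤ c) (A : Matrix (Fin m) (Fin n) ℝ) :
    frob (c • A) = c * frob A := by
  rw [frob, frob]
  have : ∀ i j, ((c • A) i j) ^ 2 = c ^ 2 * (A i j) ^ 2 := by
    intro i j; rw [Matrix.smul_apply, smul_eq_mul]; ring
  simp_rw [this, ← Finset.mul_sum]
  rw [Real.sqrt_mul (sq_nonneg c), Real.sqrt_sq hc]

lemma spec_le_frob {m n : ℕ} (A : Matrix (Fin m) (Fin n) ℝ) : spec A ≤ frob A := by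
  refine ContinuousLinearMap.opNorm_le_bound _ (frob_nonneg A) fun x => ?_
  rw [LinearMap.coe_toContinuousLinearMap']
  have hx : ‖x‖ = Real.sqrt (∑ j, (x j) ^ 2) := by
    rw [EuclideanSpace.norm_eq]
    congr 1; refine Finset.sum_congr rfl fun j _ => ?_
    rw [Real.norm_eq_abs, sq_abs]
  have happ : ∀ i, toEuclideanLin A x i = ∑ j, A i j * x j := by
    intro i
    show (A *ᵥ (WithLp.equiv 2 (Fin n → ℝ)) x) i = _
    rw [Matrix.mulVec, dotProduct]; rfl
  have hAx : ‖toEuclideanLin A x‖ = Real.sqrt (∑ i, (∑ j, A i j * x j) ^ 2) := by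
    rw [EuclideanSpace.norm_eq]
    congr 1; refine Finset.sum_congr rfl fun i _ => ?_
    rw [Real.norm_eq_abs, sq_abs, happ]
  rw [hAx, hx, frob, ← Real.sqrt_mul (by positivity)]
  apply Real.sqrt_le_sqrt
  calc ∑ i, (∑ j, A i j * x j) ^ 2
      ≤ ∑ i, (∑ j, (A i j) ^ 2) * (∑ j, (x j) ^ 2) :=
        Finset.sum_le_sum fun i _ => Finset.sum_mul_sq_le_sq_mul_sq _ _ _
    _ = (∑ i, ∑ j, (A i j) ^ 2) * (∑ j, (x j) ^ 2) := by rw [Finset.sum_mul]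

lemma spec_nonneg {m n : ℕ} (A : Matrix (Fin m) (Fin n) ℝ) : 0 ≤ spec A := norm_nonneg _

/-- **Lemma (expected sample covariance error).**
If the columns of `Ω ∈ ℝ^{n×ℓ}` are independent isotropic random vectors and
`Z = Σ⊥Ω̂₂`, then `E‖(1/ℓ)ZZᵀ − Σ⊥Σ⊥ᵀ‖₂ ≤ 2√2 ‖Σ⊥‖_F²`. -/
theorem expected_sample_covariance_error
    (m n k ℓ : ℕ) (hmn : n ≤ m) (hk0 : 0 < k) (hkn : k < n) (hℓ : 0 < ℓ)
    (σ : Fin n → ℝ) (hσ0 : ∀ i, 0 ≤ σ i)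
    (hσmono : ∀ i j : Fin n, i ≤ j → σ j ≤ σ i)
    (U : Matrix (Fin m) (Fin n) ℝ) (V : Matrix (Fin n) (Fin n) ℝ)
    (hU : Uᵀ * U = 1) (hV : Vᵀ * V = 1)
    (A : Matrix (Fin m) (Fin n) ℝ) (hA : A = U * Matrix.diagonal σ * Vᵀ)
    (hperp : tailDiag k σ ≠ 0)
    (Ω₀ : Type) [MeasurableSpace Ω₀] (μ : Measure Ω₀) [IsProbabilityMeasure μ]
    (W : Ω₀ → Matrix (Fin n) (Fin ℓ) ℝ)
    (hWmeas : ∀ i j, Measurable fun ω => W ω i j)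
    (hWindep : iIndepFun
      (fun (j : Fin ℓ) ω (i : Fin n) => W ω i j) μ)
    (hWiso : ∀ j : Fin ℓ, Isotropic μ fun ω (i : Fin n) => W ω i j)
    :
    ∫ ω, spec ((ℓ : ℝ)⁻¹ •
        ((tailDiag k σ * ((colsRight k V)ᵀ * W ω)) *
          (tailDiag k σ * ((colsRight k V)ᵀ * W ω))ᵀ) -
        tailDiag k σ * (tailDiag k σ)ᵀ) ∂μ ≤
      2 * Real.sqrt 2 * frob (tailDiag k σ) ^ 2 := by
  set D := tailDiag k σ with hD
  set C : Matrix (Fin (n - k)) (Fin n) ℝ := D * (colsRight k V)ᵀ with hC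
  set F : ℝ := frob D ^ 2 with hF
  have hassoc : ∀ ω, D * ((colsRight k V)ᵀ * W ω) = C * W ω := fun ω => by
    rw [hC, Matrix.mul_assoc]
  -- integrability of squares
  have hsqInt : ∀ (i : Fin n) (j : Fin ℓ), Integrable (fun ω => W ω i j * W ω i j) μ := by
    intro i j
    by_contra h
    have h1 := (hWiso j).2 i i
    rw [integral_undef h] at h1
    simp at h1
  have hprodInt : ∀ (b c : Fin n) (j : Fin ℓ), Integrable (fun ω => W ω b j * W ω c j) μ := by
    intro b c j
    refine Integrable.mono' (((hsqInt b j).add (hsqInt c j)).div_const 2)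
      (((hWmeas b j).mul (hWmeas c j)).aestronglyMeasurable)
      (Filter.Eventually.of_forall fun ω => ?_)
    simp only [Pi.add_apply]
    rw [Real.norm_eq_abs]
    refine abs_le.2 ⟨?_, ?_⟩ <;>
      nlinarith [sq_nonneg (W ω b j - W ω c j), sq_nonneg (W ω b j + W ω c j)]
  -- expansion of Frobenius norm squared
  have hexp : (fun ω => frob (C * W ω) ^ 2) =
      fun ω => ∑ a, ∑ j, ∑ b, ∑ c, (C a b * C a c) * (W ω b j * W ω c j) := by
    funext ω
    rw [frob_sq]
    refine Finset.sum_congr rfl fun a _ => Finset.sum_congr rfl fun j _ => ?_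
    rw [Matrix.mul_apply, sq, Finset.sum_mul_sum]
    refine Finset.sum_congr rfl fun b _ => Finset.sum_congr rfl fun c _ => ?_
    ring
  have hfInt : Integrable (fun ω => frob (C * W ω) ^ 2) μ := by
    rw [hexp]
    exact integrable_finset_sum _ fun a _ => integrable_finset_sum _ fun j _ =>
      integrable_finset_sum _ fun b _ => integrable_finset_sum _ fun c _ =>
        (hprodInt b c j).const_mul _
  -- value of the integral
  have hval : ∫ ω, frob (C * W ω) ^ 2 ∂μ = (ℓ : ℝ) * frob C ^ 2 := by
    rw [hexp]
    rw [integral_finset_sum _ (fun a _ => integrable_finset_sum _ fun j _ =>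
      integrable_finset_sum _ fun b _ => integrable_finset_sum _ fun c _ =>
        (hprodInt b c j).const_mul _)]
    have ha : ∀ a : Fin (n - k),
        ∫ ω, ∑ j, ∑ b, ∑ c, (C a b * C a c) * (W ω b j * W ω c j) ∂μ
          = (ℓ : ℝ) * ∑ b, (C a b) ^ 2 := by
      intro a
      rw [integral_finset_sum _ (fun j _ => integrable_finset_sum _ fun b _ =>
        integrable_finset_sum _ fun c _ => (hprodInt b c j).const_mul _)]
      have hj : ∀ j : Fin ℓ,
          ∫ ω, ∑ b, ∑ c, (C a b * C a c) * (W ω b j * W ω c j) ∂μ = ∑ b, (C a b) ^ 2 := by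
        intro j
        rw [integral_finset_sum _ (fun b _ => integrable_finset_sum _ fun c _ =>
          (hprodInt b c j).const_mul _)]
        refine Finset.sum_congr rfl fun b _ => ?_
        rw [integral_finset_sum _ (fun c _ => (hprodInt b c j).const_mul _)]
        have hc2 : ∀ c : Fin n, ∫ ω, (C a b * C a c) * (W ω b j * W ω c j) ∂μ
            = if c = b then (C a b) ^ 2 else 0 := by
          intro c
          rw [integral_const_mul, (hWiso j).2 b c]
          rcases eq_or_ne c b with h | h
          · subst h; simp [sq]
          · simp [h, Ne.symm h]
        simp_rw [hc2]
        simp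
      simp_rw [hj]
      rw [Finset.sum_const, Finset.card_univ, Fintype.card_fin, nsmul_eq_mul]
    simp_rw [ha]
    rw [← Finset.mul_sum, frob_sq]
  -- frob C = frob D
  have hcol : ∀ i : Fin n, ∑ b, (V b i) ^ 2 = 1 := by
    intro i
    have h := congrFun (congrFun hV i) i
    simp only [Matrix.mul_apply, Matrix.transpose_apply, Matrix.one_apply_eq] at h
    simpa [sq] using h
  have hCapp : ∀ (a : Fin (n - k)) (b : Fin n),
      C a b = σ ⟨k + a.1, by have := a.isLt; omega⟩ * V b ⟨k + a.1, by have := a.isLt; omega⟩ := by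
    intro a b
    rw [hC, hD, tailDiag, Matrix.diagonal_mul, Matrix.transpose_apply]
    rfl
  have hDsq : frob D ^ 2 = ∑ a : Fin (n - k), (σ ⟨k + a.1, by have := a.isLt; omega⟩) ^ 2 := by
    rw [frob_sq]
    refine Finset.sum_congr rfl fun a _ => ?_
    rw [hD, tailDiag]
    simp [Matrix.diagonal_apply, ite_pow, Finset.sum_ite_eq]
  have hCF : frob C ^ 2 = F := by
    rw [frob_sq, hF, hDsq]
    refine Finset.sum_congr rfl fun a _ => ?_
    simp_rw [hCapp a]
    have : ∀ b : Fin n,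
        (σ ⟨k + a.1, by have := a.isLt; omega⟩ * V b ⟨k + a.1, by have := a.isLt; omega⟩) ^ 2
        = (σ ⟨k + a.1, by have := a.isLt; omega⟩) ^ 2 * (V b ⟨k + a.1, by have := a.isLt; omega⟩) ^ 2 :=
      fun b => mul_pow _ _ _
    simp_rw [this, ← Finset.mul_sum, hcol, mul_one]
  have hF0 : 0 ≤ F := by rw [hF]; positivity
  have hinv0 : (0 : ℝ) ≤ (ℓ : ℝ)⁻¹ := by positivity
  -- pointwise bound
  have hbound : ∀ ω, spec ((ℓ : ℝ)⁻¹ • ((D * ((colsRight k V)ᵀ * W ω)) *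
        (D * ((colsRight k V)ᵀ * W ω))ᵀ) - D * Dᵀ)
      ≤ (ℓ : ℝ)⁻¹ * frob (C * W ω) ^ 2 + F := by
    intro ω
    rw [hassoc ω]
    calc spec ((ℓ : ℝ)⁻¹ • ((C * W ω) * (C * W ω)ᵀ) - D * Dᵀ)
        ≤ frob ((ℓ : ℝ)⁻¹ • ((C * W ω) * (C * W ω)ᵀ) - D * Dᵀ) := spec_le_frob _
      _ ≤ frob ((ℓ : ℝ)⁻¹ • ((C * W ω) * (C * W ω)ᵀ)) + frob (D * Dᵀ) := frob_sub_le _ _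
      _ = (ℓ : ℝ)⁻¹ * frob ((C * W ω) * (C * W ω)ᵀ) + frob (D * Dᵀ) := by
          rw [frob_smul _ hinv0]
      _ ≤ (ℓ : ℝ)⁻¹ * (frob (C * W ω) * frob (C * W ω)ᵀ) + frob D * frob Dᵀ :=
          add_le_add (mul_le_mul_of_nonneg_left (frob_mul_le _ _) hinv0) (frob_mul_le _ _)
      _ = (ℓ : ℝ)⁻¹ * frob (C * W ω) ^ 2 + F := by
          rw [frob_transpose, frob_transpose, hF]; ring
  have hgInt : Integrable (fun ω => (ℓ : ℝ)⁻¹ * frob (C * W ω) ^ 2 + F) μ :=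
    (hfInt.const_mul _).add (integrable_const F)
  calc ∫ ω, spec ((ℓ : ℝ)⁻¹ • ((D * ((colsRight k V)ᵀ * W ω)) *
        (D * ((colsRight k V)ᵀ * W ω))ᵀ) - D * Dᵀ) ∂μ
      ≤ ∫ ω, ((ℓ : ℝ)⁻¹ * frob (C * W ω) ^ 2 + F) ∂μ :=
        integral_mono_of_nonneg (Filter.Eventually.of_forall fun ω => spec_nonneg _)
          hgInt (Filter.Eventually.of_forall hbound)
    _ = (ℓ : ℝ)⁻¹ * ((ℓ : ℝ) * frob C ^ 2) + F := by
        rw [integral_add (hfInt.const_mul _) (integrable_const F), integral_const_mul, hval,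
          integral_const]
        simp
    _ = 2 * F := by
        rw [hCF, ← mul_assoc, inv_mul_cancel₀ (by exact_mod_cast hℓ.ne' : (ℓ : ℝ) ≠ 0), one_mul]
        ring
    _ ≤ 2 * Real.sqrt 2 * F := by
        have h1 : (1 : ℝ) ≤ Real.sqrt 2 := by
          rw [show (1 : ℝ) = Real.sqrt 1 by simp]
          exact Real.sqrt_le_sqrt (by norm_num)
        nlinarith

end
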